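/- (Disjointness of Janet cones.) Let n ≥ 1 and let A ⊂ (ℤ_{≥0})^n be a finite set of multi-indices. For α = (α_1,…,α_n) ∈ A call an index k ∈ {1,…,n} multiplicative for α (with respect to A) if α_k = max{ α'_k : α' ∈ A, α'_1 = α_1, …, α'_{k−1} = α_{k−1} }. Define the Janet cone of α as C(α) := { α + β : β ∈ (ℤ_{≥0})^n with β_k = 0 for every index k that is not multiplicative for α }. Then for any two distinct α, α' ∈ A the cones C(α) and C(α') are disjoint. -/
import Mathlib


/-- The index `k` is multiplicative for the multi-index `α` with respect to the finite
set `A` of multi-indices (Janet division): `α_k` is maximal among all `α' ∈ A` agreeing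
with `α` in the positions before `k`. -/
def IsMultiplicative {n : ℕ} (A : Finset (Fin n → ℕ)) (α : Fin n → ℕ) (k : Fin n) :
    Prop :=
  α k = (A.filter fun α' => ∀ j : Fin n, j < k → α' j = α j).sup fun α' => α' k

/-- The Janet cone of `α` with respect to `A`: all shifts of `α` in multiplicative
directions only. -/
def janetCone {n : ℕ} (A : Finset (Fin n → ℕ)) (α : Fin n → ℕ) : Set (Fin n → ℕ) :=
  {γ | ∃ β : Fin n → ℕ, γ = α + β ∧ ∀ k : Fin n, ¬ IsMultiplicative A α k → β k = 0}

lemma janet_aux {n : ℕ} (A : Finset (Fin n → ℕ)) (α α' γ : Fin n → ℕ) (hα' : α' ∈ A)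
    (hγ : γ ∈ janetCone A α) (hγ' : γ ∈ janetCone A α') (k : Fin n)
    (hmin : ∀ j : Fin n, j < k → α j = α' j) (hk : α k < α' k) : False := by
  obtain ⟨β, hβ, hβ0⟩ := hγ
  obtain ⟨β', hβ', _⟩ := hγ'
  have hγk : α k + β k = α' k + β' k := by
    have := congrFun (hβ.symm.trans hβ') k
    simpa using this
  have hβk : β k ≠ 0 := by
    intro h0
    omega
  have hmul : IsMultiplicative A α k := by
    by_contra h
    exact hβk (hβ0 k h)
  have hmem : α' ∈ A.filter fun α'' => ∀ j : Fin n, j < k → α'' j = α j := by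
    refine Finset.mem_filter.mpr ⟨hα', fun j hj => (hmin j hj).symm⟩
  have hle : α' k ≤ α k := by
    rw [hmul]
    exact Finset.le_sup (f := fun α'' => α'' k) hmem
  omega

/-- **Disjointness of Janet cones**: the Janet cones of two distinct elements of a
finite set of multi-indices are disjoint. -/
theorem janetCone_disjoint (n : ℕ) (hn : 1 ≤ n) (A : Finset (Fin n → ℕ))
    (α α' : Fin n → ℕ) (hα : α ∈ A) (hα' : α' ∈ A) (hne : α ≠ α') :
    janetCone A α ∩ janetCone A α' = ∅ := by
  ext γ
  simp only [Set.mem_inter_iff, Set.mem_empty_iff_false, iff_false]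
  rintro ⟨hγ, hγ'⟩
  have hsne : (Finset.univ.filter fun k : Fin n => α k ≠ α' k).Nonempty := by
    by_contra h
    rw [Finset.not_nonempty_iff_eq_empty] at h
    apply hne
    funext k
    by_contra hk
    exact absurd h (Finset.ne_empty_of_mem (Finset.mem_filter.mpr ⟨Finset.mem_univ k, hk⟩))
  set k := (Finset.univ.filter fun k : Fin n => α k ≠ α' k).min' hsne with hkdef
  have hkne : α k ≠ α' k :=
    (Finset.mem_filter.mp ((Finset.univ.filter fun k : Fin n => α k ≠ α' k).min'_mem hsne)).2
  have hmin : ∀ j : Fin n, j < k → α j = α' j := by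
    intro j hj
    by_contra hjne
    exact absurd ((Finset.univ.filter fun k : Fin n => α k ≠ α' k).min'_le j
      (Finset.mem_filter.mpr ⟨Finset.mem_univ j, hjne⟩)) (not_le.mpr hj)
  rcases lt_or_gt_of_ne hkne with h | h
  · exact janet_aux A α α' γ hα' hγ hγ' k hmin h
  · exact janet_aux A α' α γ hα hγ' hγ k (fun j hj => (hmin j hj).symm) h
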